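/- Characterization of the PSW estimand (equation (B.4.2)): Assume (A1)–(A3), P(A̲(K−m)=1_m) > 0 and P(A̲(K−m)=0_m) > 0. Then θ_psw^(m) = Σ_{b̄} 𝔼[Y^{(b̄,1_m)} | Ā(K−m−1)=b̄] · P(Ā(K−m−1)=b̄ | A̲(K−m)=1_m) − Σ_{b̄} 𝔼[Y^{(b̄,0_m)} | Ā(K−m−1)=b̄] · P(Ā(K−m−1)=b̄ | A̲(K−m)=0_m), where both sums run over b̄ ∈ {0,1}^{K−m} with P(Ā(K−m−1)=b̄) > 0. -/

import Mathlib

open MeasureTheory Finset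
open scoped Classical

namespace MSMPaper

noncomputable section

variable {Ω : Type*} [MeasurableSpace Ω] {𝓛 : Type*}

/-- Conditional probability `P(E | F) = P(E ∩ F) / P(F)` as a real number
(junk value `0` when `P F = 0`). -/
def cP (P : Measure Ω) (E F : Set Ω) : ℝ := (P (E ∩ F)).toReal / (P F).toReal

variable {K : ℕ}

/-- Event `Ā(t−1) = b̄` (treatment history up to, not including, time `t`). -/
def Apast (A : Fin K → Ω → Bool) (t : ℕ) (b : Fin K → Bool) : Set Ω :=
  {ω | ∀ k : Fin K, (k : ℕ) < t → A k ω = b k}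

/-- Event `L̄(t) = l̄` (covariate history up to and including time `t`). -/
def Lpast (L : Fin K → Ω → 𝓛) (t : ℕ) (l : Fin K → 𝓛) : Set Ω :=
  {ω | ∀ k : Fin K, (k : ℕ) ≤ t → L k ω = l k}

/-- Event `A̲(s, t−1) = b` (treatment history from time `s` up to, not including, `t`). -/
def Aseg (A : Fin K → Ω → Bool) (s t : ℕ) (b : Fin K → Bool) : Set Ω :=
  {ω | ∀ k : Fin K, s ≤ (k : ℕ) → (k : ℕ) < t → A k ω = b k}

/-- Event `A̲(K−m) = a̲` for a (last-`m`) treatment vector `as`. -/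
def EtrV (A : Fin K → Ω → Bool) (m : ℕ) (as : Fin K → Bool) : Set Ω :=
  {ω | ∀ k : Fin K, K - m ≤ (k : ℕ) → A k ω = as k}

/-- Event `A̲(K−m) = a_m` (constant `a` on the last `m` coordinates). -/
def Etr (A : Fin K → Ω → Bool) (m : ℕ) (a : Bool) : Set Ω :=
  EtrV A m (fun _ => a)

/-- Stabilized weights `W_sw`. -/
def Wsw (P : Measure Ω) (A : Fin K → Ω → Bool) (L : Fin K → Ω → 𝓛) : Ω → ℝ :=
  fun ω => ∏ k : Fin K,
    cP P {ω' | A k ω' = A k ω} (Apast A (k : ℕ) (fun j => A j ω)) /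
      cP P {ω' | A k ω' = A k ω}
        (Lpast L (k : ℕ) (fun j => L j ω) ∩ Apast A (k : ℕ) (fun j => A j ω))

/-- Restricted stabilized weights `W_rsw^(m)`. -/
def Wrsw (P : Measure Ω) (A : Fin K → Ω → Bool) (L : Fin K → Ω → 𝓛) (m : ℕ) : Ω → ℝ :=
  fun ω => ∏ k ∈ Finset.univ.filter (fun k : Fin K => K - m ≤ (k : ℕ)),
    cP P {ω' | A k ω' = A k ω} (Aseg A (K - m) (k : ℕ) (fun j => A j ω)) /
      cP P {ω' | A k ω' = A k ω}
        (Lpast L (k : ℕ) (fun j => L j ω) ∩ Apast A (k : ℕ) (fun j => A j ω))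

/-- Partial stabilized weights `W_psw^(m)`. -/
def Wpsw (P : Measure Ω) (A : Fin K → Ω → Bool) (L : Fin K → Ω → 𝓛) (m : ℕ) : Ω → ℝ :=
  fun ω => ∏ k ∈ Finset.univ.filter (fun k : Fin K => K - m ≤ (k : ℕ)),
    cP P {ω' | A k ω' = A k ω} (Apast A (k : ℕ) (fun j => A j ω)) /
      cP P {ω' | A k ω' = A k ω}
        (Lpast L (k : ℕ) (fun j => L j ω) ∩ Apast A (k : ℕ) (fun j => A j ω))

/-- IP-weighted contrast `θ_W^(m)`. -/
def θW (P : Measure Ω) (A : Fin K → Ω → Bool) (m : ℕ) (W Y : Ω → ℝ) : ℝ :=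
  (∫ ω in Etr A m true, W ω * Y ω ∂P) / (∫ ω in Etr A m true, W ω ∂P) -
    (∫ ω in Etr A m false, W ω * Y ω ∂P) / (∫ ω in Etr A m false, W ω ∂P)

/-- `rev j` is the time index `K − 1 − j`; the paper's coefficient `ψ_{j+1}`
multiplies `a(K − (j+1)) = a(rev j)`. -/
def rev (j : Fin K) : Fin K := ⟨K - 1 - (j : ℕ), by have := j.isLt; omega⟩

/-- `θ^(K) = 𝔼[Y^{1_K}] − 𝔼[Y^{0_K}]`. -/
def θKfull (P : Measure Ω) (Ypot : (Fin K → Bool) → Ω → ℝ) : ℝ :=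
  (∫ ω, Ypot (fun _ => true) ω ∂P) - ∫ ω, Ypot (fun _ => false) ω ∂P

/-- (A1) consistency. -/
def A1ok (A : Fin K → Ω → Bool) (Y : Ω → ℝ) (Ypot : (Fin K → Bool) → Ω → ℝ) : Prop :=
  ∀ (a : Fin K → Bool) (ω : Ω), (∀ k, A k ω = a k) → Y ω = Ypot a ω

/-- (A2) sequential exchangeability. -/
def A2ok (P : Measure Ω) (A : Fin K → Ω → Bool) (L : Fin K → Ω → 𝓛)
    (Ypot : (Fin K → Bool) → Ω → ℝ) : Prop :=
  ∀ (t : Fin K) (a : Fin K → Bool) (B : Set ℝ), MeasurableSet B →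
    ∀ (av : Bool) (l : Fin K → 𝓛) (b : Fin K → Bool),
      0 < P (Lpast L (t : ℕ) l ∩ Apast A (t : ℕ) b) →
      cP P ({ω | Ypot a ω ∈ B} ∩ {ω | A t ω = av}) (Lpast L (t : ℕ) l ∩ Apast A (t : ℕ) b) =
        cP P {ω | Ypot a ω ∈ B} (Lpast L (t : ℕ) l ∩ Apast A (t : ℕ) b) *
          cP P {ω | A t ω = av} (Lpast L (t : ℕ) l ∩ Apast A (t : ℕ) b)

/-- (A3) positivity. -/
def A3ok (P : Measure Ω) (A : Fin K → Ω → Bool) (L : Fin K → Ω → 𝓛) : Prop :=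
  ∀ (t : Fin K) (av : Bool) (l : Fin K → 𝓛) (b : Fin K → Bool),
    0 < P (Lpast L (t : ℕ) l ∩ Apast A (t : ℕ) b) →
    0 < cP P {ω | A t ω = av} (Lpast L (t : ℕ) l ∩ Apast A (t : ℕ) b)

/-- The marginal structural model `𝔼[Y^{ā}] = ψ₀ + Σ_{j=1}^K ψ_j a(K−j)`;
here `ψ j` is the paper's `ψ_{j+1}`, the coefficient of `a(K−1−j)`. -/
def MSMeq (P : Measure Ω) (Ypot : (Fin K → Bool) → Ω → ℝ) (ψ0 : ℝ) (ψ : Fin K → ℝ) : Prop :=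
  ∀ a : Fin K → Bool,
    (∫ ω, Ypot a ω ∂P) = ψ0 + ∑ j : Fin K, ψ j * (if a (rev j) = true then 1 else 0)

/-- (A5) conditional MSM given the past treatment history `Ā(K−m−1)`. -/
def A5ok (P : Measure Ω) (A : Fin K → Ω → Bool) (Ypot : (Fin K → Bool) → Ω → ℝ)
    (m : ℕ) : Prop :=
  ∀ b : Fin K → Bool, 0 < P (Apast A (K - m) b) →
    ∃ (φ0 : ℝ) (φ : Fin K → ℝ), ∀ a : Fin K → Bool,
      (∫ ω in Apast A (K - m) b, Ypot a ω ∂P) / (P (Apast A (K - m) b)).toReal =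
        φ0 + ∑ j : Fin K, φ j * (if a (rev j) = true then 1 else 0)

/-- `q_{j+1} = P(A(K−1−j)=1 | A̲(K−m)=1_m) − P(A(K−1−j)=1 | A̲(K−m)=0_m)`. -/
def qcoef (P : Measure Ω) (A : Fin K → Ω → Bool) (m : ℕ) (j : Fin K) : ℝ :=
  cP P {ω | A (rev j) ω = true} (Etr A m true) -
    cP P {ω | A (rev j) ω = true} (Etr A m false)

end

noncomputable section

variable {Ω : Type*} [MeasurableSpace Ω] {K : ℕ}

/-- Concatenated regime `(b̄, a̲) ∈ {0,1}^K`: `b̄` on the coordinates before `K−m`,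
`a̲` on the last `m` coordinates. -/
def concatRegime (m : ℕ) (b : {k : Fin K // (k : ℕ) < K - m} → Bool)
    (as : Fin K → Bool) : Fin K → Bool :=
  fun k => if h : (k : ℕ) < K - m then b ⟨k, h⟩ else as k

/-- Event `Ā(K−m−1) = b̄` for a past history `b̄ ∈ {0,1}^{K−m}`. -/
def ApastV (A : Fin K → Ω → Bool) (m : ℕ)
    (b : {k : Fin K // (k : ℕ) < K - m} → Bool) : Set Ω :=
  {ω | ∀ (k : Fin K) (h : (k : ℕ) < K - m), A k ω = b ⟨k, h⟩}

end


set_option linter.unusedSectionVars false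

noncomputable section AuxMSM
variable {Ω : Type*} [MeasurableSpace Ω] {𝓛 : Type*} {K : ℕ}

-- aux lemmas
section Aux
variable [MeasurableSpace 𝓛] [Fintype 𝓛] [Nonempty 𝓛] [MeasurableSingletonClass 𝓛]

lemma cP_mul (P : Measure Ω) [IsFiniteMeasure P] (E F : Set Ω) :
    (P (E ∩ F)).toReal = cP P E F * (P F).toReal := by
  by_cases h : P F = 0
  · have h0 : P (E ∩ F) = 0 := measure_mono_null Set.inter_subset_right h
    simp [cP, h0, h]
  · rw [cP, div_mul_cancel₀]
    exact ENNReal.toReal_ne_zero.mpr ⟨h, measure_ne_top _ _⟩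

lemma measurableSet_Apast {A : Fin K → Ω → Bool} (hA : ∀ k, Measurable (A k))
    (t : ℕ) (b : Fin K → Bool) : MeasurableSet (Apast A t b) := by
  have : Apast A t b = ⋂ k : Fin K, ⋂ _ : (k : ℕ) < t, {ω | A k ω = b k} := by
    ext ω; simp [Apast]
  rw [this]
  exact MeasurableSet.iInter fun k => MeasurableSet.iInter fun _ =>
    hA k (measurableSet_singleton _)

lemma measurableSet_Lpast {L : Fin K → Ω → 𝓛} (hL : ∀ k, Measurable (L k))
    (t : ℕ) (l : Fin K → 𝓛) : MeasurableSet (Lpast L t l) := by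
  have : Lpast L t l = ⋂ k : Fin K, ⋂ _ : (k : ℕ) ≤ t, {ω | L k ω = l k} := by
    ext ω; simp [Lpast]
  rw [this]
  exact MeasurableSet.iInter fun k => MeasurableSet.iInter fun _ =>
    hL k (measurableSet_singleton _)

lemma Apast_congr {A : Fin K → Ω → Bool} {t : ℕ} {b b' : Fin K → Bool}
    (h : ∀ k : Fin K, (k : ℕ) < t → b k = b' k) : Apast A t b = Apast A t b' := by
  ext ω
  exact ⟨fun hω k hk => (hω k hk).trans (h k hk),
         fun hω k hk => (hω k hk).trans (h k hk).symm⟩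

lemma Lpast_congr {L : Fin K → Ω → 𝓛} {t : ℕ} {l l' : Fin K → 𝓛}
    (h : ∀ k : Fin K, (k : ℕ) ≤ t → l k = l' k) : Lpast L t l = Lpast L t l' := by
  ext ω
  exact ⟨fun hω k hk => (hω k hk).trans (h k hk),
         fun hω k hk => (hω k hk).trans (h k hk).symm⟩

lemma Apast_succ {A : Fin K → Ω → Bool} {t : ℕ} (ht : t < K) (b : Fin K → Bool) :
    Apast A (t + 1) b = Apast A t b ∩ {ω | A ⟨t, ht⟩ ω = b ⟨t, ht⟩} := by
  ext ω
  constructor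
  · intro h
    exact ⟨fun k hk => h k (by omega), h ⟨t, ht⟩ (by simp)⟩
  · rintro ⟨h1, h2⟩ k hk
    rcases Nat.lt_succ_iff_lt_or_eq.mp hk with h | h
    · exact h1 k h
    · have hk0 : k = ⟨t, ht⟩ := Fin.ext h
      rw [hk0]; exact h2

def pden (P : Measure Ω) (A : Fin K → Ω → Bool) (L : Fin K → Ω → 𝓛) (k : Fin K) :
    Ω → ℝ :=
  fun ω => cP P {ω' | A k ω' = A k ω}
    (Lpast L (k : ℕ) (fun j => L j ω) ∩ Apast A (k : ℕ) (fun j => A j ω))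

lemma pden_const (P : Measure Ω) (A : Fin K → Ω → Bool) (L : Fin K → Ω → 𝓛)
    (k₀ : Fin K) (abar : Fin K → Bool) (l : Fin K → 𝓛) (ω : Ω)
    (h1 : ∀ j : Fin K, (j : ℕ) ≤ (k₀ : ℕ) → L j ω = l j)
    (h2 : ∀ j : Fin K, (j : ℕ) ≤ (k₀ : ℕ) → A j ω = abar j) :
    pden P A L k₀ ω
      = cP P {ω' | A k₀ ω' = abar k₀} (Lpast L (k₀ : ℕ) l ∩ Apast A (k₀ : ℕ) abar) := by
  unfold pden
  rw [h2 k₀ le_rfl, Lpast_congr (fun j hj => h1 j hj),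
    Apast_congr (fun j hj => h2 j (le_of_lt hj))]

def hist (A : Fin K → Ω → Bool) (L : Fin K → Ω → 𝓛) :
    Ω → (Fin K → Bool) × (Fin K → 𝓛) :=
  fun ω => (fun j => A j ω, fun j => L j ω)

lemma measurable_hist_fun {β : Type*} [MeasurableSpace β]
    {A : Fin K → Ω → Bool} {L : Fin K → Ω → 𝓛}
    (hA : ∀ k, Measurable (A k)) (hL : ∀ k, Measurable (L k))
    (g : (Fin K → Bool) × (Fin K → 𝓛) → β) :
    Measurable (fun ω => g (hist A L ω)) := by
  have hH : Measurable (hist A L) :=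
    (measurable_pi_lambda _ fun j => hA j).prodMk (measurable_pi_lambda _ fun j => hL j)
  exact (measurable_of_countable g).comp hH

lemma hist_fun_bdd {A : Fin K → Ω → Bool} {L : Fin K → Ω → 𝓛}
    (g : (Fin K → Bool) × (Fin K → 𝓛) → ℝ) :
    ∃ C, ∀ ω, ‖g (hist A L ω)‖ ≤ C := by
  obtain ⟨p₀, hp₀⟩ := Finite.exists_max (fun p : (Fin K → Bool) × (Fin K → 𝓛) => ‖g p‖)
  exact ⟨‖g p₀‖, fun ω => hp₀ (hist A L ω)⟩

lemma pden_eq_hist (P : Measure Ω) (A : Fin K → Ω → Bool) (L : Fin K → Ω → 𝓛)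
    (k : Fin K) :
    pden P A L k = fun ω =>
      (fun p : (Fin K → Bool) × (Fin K → 𝓛) =>
        cP P {ω' | A k ω' = p.1 k} (Lpast L (k : ℕ) p.2 ∩ Apast A (k : ℕ) p.1))
        (hist A L ω) := rfl

lemma measurable_pden (P : Measure Ω) {A : Fin K → Ω → Bool} {L : Fin K → Ω → 𝓛}
    (hA : ∀ k, Measurable (A k)) (hL : ∀ k, Measurable (L k)) (k : Fin K) :
    Measurable (pden P A L k) :=
  measurable_hist_fun hA hL
    (fun p : (Fin K → Bool) × (Fin K → 𝓛) =>
      cP P {ω' | A k ω' = p.1 k} (Lpast L (k : ℕ) p.2 ∩ Apast A (k : ℕ) p.1))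

lemma pden_inv_bdd (P : Measure Ω) (A : Fin K → Ω → Bool) (L : Fin K → Ω → 𝓛)
    (k : Fin K) : ∃ C, ∀ ω, ‖(pden P A L k ω)⁻¹‖ ≤ C := by
  obtain ⟨C, hC⟩ := hist_fun_bdd (A := A) (L := L)
    (fun p : (Fin K → Bool) × (Fin K → 𝓛) =>
      (cP P {ω' | A k ω' = p.1 k} (Lpast L (k : ℕ) p.2 ∩ Apast A (k : ℕ) p.1))⁻¹)
  exact ⟨C, fun ω => hC ω⟩

lemma setIntegral_partition {β : Type*} [Fintype β] [MeasurableSpace β]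
    [MeasurableSingletonClass β]
    (P : Measure Ω) {h : Ω → β} (hh : Measurable h) {E : Set Ω} (hE : MeasurableSet E)
    {f : Ω → ℝ} (hf : ∀ v : β, IntegrableOn f (E ∩ h ⁻¹' {v}) P) :
    ∫ ω in E, f ω ∂P = ∑ v : β, ∫ ω in E ∩ h ⁻¹' {v}, f ω ∂P := by
  have key := integral_biUnion_finset (μ := P) (f := f) Finset.univ
    (s := fun v : β => E ∩ h ⁻¹' {v})
    (fun v _ => hE.inter (hh (measurableSet_singleton v)))
    (fun v _ w _ hvw => Set.disjoint_left.mpr fun ω h1 h2 => hvw (h1.2.symm.trans h2.2))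
    (fun v _ => hf v)
  have hE' : (⋃ v ∈ Finset.univ, E ∩ h ⁻¹' {v}) = E := by
    ext ω; simp
  rw [hE'] at key
  exact key

lemma integral_ite_one (μ : Measure Ω) {s : Set Ω} (hs : MeasurableSet s) :
    ∫ ω, (if ω ∈ s then (1 : ℝ) else 0) ∂μ = (μ s).toReal := by
  rw [show (fun ω => if ω ∈ s then (1 : ℝ) else 0) = Set.indicator s 1 from
    funext fun ω => by by_cases h : ω ∈ s <;> simp [h]]
  exact integral_indicator_one hs

lemma exch_step (P : Measure Ω) [IsProbabilityMeasure P]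
    (A : Fin K → Ω → Bool) (L : Fin K → Ω → 𝓛)
    (hA : ∀ k, Measurable (A k)) (hL : ∀ k, Measurable (L k))
    (Ypot : (Fin K → Bool) → Ω → ℝ) (hYpm : ∀ a, Measurable (Ypot a))
    (hA2 : A2ok P A L Ypot)
    (abar : Fin K → Bool) (k : Fin K) (l : Fin K → 𝓛)
    (hF : P (Lpast L (k : ℕ) l ∩ Apast A (k : ℕ) abar) ≠ 0) :
    ∫ ω in Lpast L (k : ℕ) l ∩ Apast A (k : ℕ) abar,
        Ypot abar ω * (if A k ω = abar k then (1 : ℝ) else 0) ∂P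
      = cP P {ω | A k ω = abar k} (Lpast L (k : ℕ) l ∩ Apast A (k : ℕ) abar)
          * ∫ ω in Lpast L (k : ℕ) l ∩ Apast A (k : ℕ) abar, Ypot abar ω ∂P := by
  set F := Lpast L (k : ℕ) l ∩ Apast A (k : ℕ) abar with hFdef
  have hFm : MeasurableSet F :=
    (measurableSet_Lpast hL _ _).inter (measurableSet_Apast hA _ _)
  set μ := ProbabilityTheory.cond P F with hμdef
  have hμP : IsProbabilityMeasure μ := ProbabilityTheory.cond_isProbabilityMeasure hF
  have hPF : (P F).toReal ≠ 0 := ENNReal.toReal_ne_zero.mpr ⟨hF, measure_ne_top _ _⟩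
  have hcP : ∀ E : Set Ω, cP P E F = (μ E).toReal := by
    intro E
    rw [hμdef, ProbabilityTheory.cond_apply hFm, ENNReal.toReal_mul, ENNReal.toReal_inv,
      cP, Set.inter_comm E F, div_eq_inv_mul]
  have hres : ∀ g : Ω → ℝ, ∫ ω, g ω ∂μ = (P F).toReal⁻¹ * ∫ ω in F, g ω ∂P := by
    intro g
    rw [hμdef, show ProbabilityTheory.cond P F = (P F)⁻¹ • P.restrict F from rfl, integral_smul_measure,
      ENNReal.toReal_inv, smul_eq_mul]
  have hkey : ∀ (s : Set ℝ), MeasurableSet s → ∀ av : Bool,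
      μ (Ypot abar ⁻¹' s ∩ A k ⁻¹' {av})
        = μ (Ypot abar ⁻¹' s) * μ (A k ⁻¹' {av}) := by
    intro s hs av
    have h2 := hA2 k abar s hs av l abar (zero_lt_iff.mpr hF)
    have e2 : {ω | A k ω = av} = A k ⁻¹' {av} := by ext ω; simp
    rw [e2, hcP, hcP, hcP] at h2
    rw [← ENNReal.toReal_mul] at h2
    exact (ENNReal.toReal_eq_toReal_iff' (measure_ne_top _ _)
      (ENNReal.mul_ne_top (measure_ne_top _ _) (measure_ne_top _ _))).mp h2
  have hIndep : ProbabilityTheory.IndepFun (Ypot abar) (A k) μ := by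
    rw [ProbabilityTheory.indepFun_iff_measure_inter_preimage_eq_mul]
    intro s t hs _
    by_cases ht1 : true ∈ t <;> by_cases ht2 : false ∈ t
    · have : t = Set.univ := by ext b; cases b <;> simp [ht1, ht2]
      rw [this, Set.preimage_univ, Set.inter_univ, measure_univ, mul_one]
    · have : t = {true} := by ext b; cases b <;> simp [ht1, ht2]
      rw [this]; exact hkey s hs true
    · have : t = {false} := by ext b; cases b <;> simp [ht1, ht2]
      rw [this]; exact hkey s hs false
    · have : t = ∅ := by ext b; cases b <;> simp [ht1, ht2]
      simp [this]
  have hInd : ProbabilityTheory.IndepFun (Ypot abar)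
      (fun ω => if A k ω = abar k then (1 : ℝ) else 0) μ := by
    have : (fun ω => if A k ω = abar k then (1 : ℝ) else 0)
        = (fun b => if b = abar k then (1 : ℝ) else 0) ∘ (A k) := rfl
    rw [this]
    exact hIndep.comp measurable_id (measurable_of_countable _)
  have hmul := hInd.integral_fun_mul_eq_mul_integral (hYpm abar).aestronglyMeasurable
    (((measurable_of_countable (fun b => if b = abar k then (1 : ℝ) else 0)).comp
      (hA k)).aestronglyMeasurable)
  have hindint : ∫ ω, (if A k ω = abar k then (1 : ℝ) else 0) ∂μ
      = (μ {ω | A k ω = abar k}).toReal := by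
    have hsm : MeasurableSet {ω | A k ω = abar k} := hA k (measurableSet_singleton _)
    have e : (fun ω => if A k ω = abar k then (1 : ℝ) else 0)
        = Set.indicator {ω | A k ω = abar k} 1 := by
      funext ω
      by_cases h : A k ω = abar k <;>
        simp [h, Set.indicator_apply, Set.mem_setOf_eq]
    rw [e]
    exact integral_indicator_one hsm
  have hmul' : ∫ ω, Ypot abar ω * (if A k ω = abar k then (1 : ℝ) else 0) ∂μ
      = (∫ ω, Ypot abar ω ∂μ) * (μ {ω | A k ω = abar k}).toReal := by
    rw [← hindint, ← hmul]
  rw [hres, hres] at hmul'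
  have goal1 : ∫ ω in F, Ypot abar ω * (if A k ω = abar k then (1 : ℝ) else 0) ∂P
      = (μ {ω | A k ω = abar k}).toReal * ∫ ω in F, Ypot abar ω ∂P := by
    have h3 := congrArg (fun x => (P F).toReal * x) hmul'
    rw [← mul_assoc, mul_inv_cancel₀ hPF, one_mul] at h3
    calc ∫ ω in F, Ypot abar ω * (if A k ω = abar k then (1:ℝ) else 0) ∂P
        = (P F).toReal * (((P F).toReal⁻¹ * ∫ ω in F, Ypot abar ω ∂P)
            * (μ {ω | A k ω = abar k}).toReal) := h3
      _ = ((P F).toReal * (P F).toReal⁻¹)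
            * ((∫ ω in F, Ypot abar ω ∂P) * (μ {ω | A k ω = abar k}).toReal) := by ring
      _ = (μ {ω | A k ω = abar k}).toReal * ∫ ω in F, Ypot abar ω ∂P := by
            rw [mul_inv_cancel₀ hPF, one_mul]; ring
  rw [goal1, hcP]

lemma single_step (P : Measure Ω) [IsProbabilityMeasure P]
    (A : Fin K → Ω → Bool) (L : Fin K → Ω → 𝓛)
    (hA : ∀ k, Measurable (A k)) (hL : ∀ k, Measurable (L k)) (hA3 : A3ok P A L)
    (abar : Fin K → Bool) (t : ℕ) (ht : t < K)
    (X : Ω → ℝ) (hXm : Measurable X) (hXi : Integrable X P)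
    (hyp : ∀ l : Fin K → 𝓛, P (Lpast L t l ∩ Apast A t abar) ≠ 0 →
      ∫ ω in Lpast L t l ∩ Apast A t abar,
          X ω * (if A ⟨t, ht⟩ ω = abar ⟨t, ht⟩ then (1 : ℝ) else 0) ∂P
        = cP P {ω | A ⟨t, ht⟩ ω = abar ⟨t, ht⟩} (Lpast L t l ∩ Apast A t abar)
            * ∫ ω in Lpast L t l ∩ Apast A t abar, X ω ∂P) :
    ∫ ω in Apast A (t + 1) abar, (pden P A L ⟨t, ht⟩ ω)⁻¹ * X ω ∂P
      = ∫ ω in Apast A t abar, X ω ∂P := by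
  classical
  have hXim : Integrable (fun ω => (pden P A L ⟨t, ht⟩ ω)⁻¹ * X ω) P := by
    obtain ⟨C, hC⟩ := pden_inv_bdd P A L ⟨t, ht⟩
    exact hXi.bdd_mul ((measurable_pden P hA hL ⟨t, ht⟩).inv).aestronglyMeasurable (ae_of_all _ hC)
  set hT : Ω → ({j : Fin K // (j : ℕ) ≤ t} → 𝓛) := fun ω j => L j ω with hTdef
  have hTmeas : Measurable hT := measurable_pi_lambda _ fun j => hL j
  have hfib : ∀ v : {j : Fin K // (j : ℕ) ≤ t} → 𝓛,
      hT ⁻¹' {v} = Lpast L t (fun j : Fin K =>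
        if h : (j : ℕ) ≤ t then v ⟨j, h⟩ else Classical.arbitrary 𝓛) := by
    intro v
    ext ω
    simp only [Set.mem_preimage, Set.mem_singleton_iff, funext_iff, hTdef, Lpast,
      Set.mem_setOf_eq]
    constructor
    · intro h j hj
      rw [dif_pos hj]
      exact h ⟨j, hj⟩
    · intro h j
      have := h j.1 j.2
      rwa [dif_pos j.2] at this
  have hAp1 : MeasurableSet (Apast A (t + 1) abar) := measurableSet_Apast hA _ _
  have hApt : MeasurableSet (Apast A t abar) := measurableSet_Apast hA _ _
  rw [setIntegral_partition P hTmeas hAp1 (fun v => hXim.integrableOn),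
    setIntegral_partition P hTmeas hApt (fun v => hXi.integrableOn)]
  refine Finset.sum_congr rfl fun v _ => ?_
  set l : Fin K → 𝓛 := fun j : Fin K =>
    if h : (j : ℕ) ≤ t then v ⟨j, h⟩ else Classical.arbitrary 𝓛 with hl
  set s : Set Ω := {ω | A ⟨t, ht⟩ ω = abar ⟨t, ht⟩} with hs
  set F : Set Ω := Lpast L t l ∩ Apast A t abar with hF
  have hsm : MeasurableSet s := hA _ (measurableSet_singleton _)
  have hFm : MeasurableSet F :=
    (measurableSet_Lpast hL _ _).inter (measurableSet_Apast hA _ _)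
  have e1 : Apast A (t + 1) abar ∩ hT ⁻¹' {v} = F ∩ s := by
    rw [hfib v, Apast_succ ht, hF, hs, hl]
    ext ω
    simp only [Set.mem_inter_iff, Set.mem_setOf_eq]
    tauto
  have e2 : Apast A t abar ∩ hT ⁻¹' {v} = F := by
    rw [hfib v, hF, hl, Set.inter_comm]
  rw [e1, e2]
  by_cases hPF : P F = 0
  · have z1 : P (F ∩ s) = 0 := measure_mono_null Set.inter_subset_left hPF
    rw [Measure.restrict_eq_zero.mpr z1, Measure.restrict_eq_zero.mpr hPF]
    simp
  · have hcpos : 0 < cP P s F := hA3 ⟨t, ht⟩ (abar ⟨t, ht⟩) l abar (zero_lt_iff.mpr hPF)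
    have hconst : ∀ ω ∈ F ∩ s, pden P A L ⟨t, ht⟩ ω = cP P s F := by
      rintro ω ⟨⟨hωL, hωA⟩, hωs⟩
      exact pden_const P A L ⟨t, ht⟩ abar l ω (fun j hj => hωL j hj)
        (fun j hj => by
          rcases lt_or_eq_of_le hj with h | h
          · exact hωA j h
          · have hj0 : j = ⟨t, ht⟩ := Fin.ext h
            rw [hj0]; exact hωs)
    have step1 : ∫ ω in F ∩ s, (pden P A L ⟨t, ht⟩ ω)⁻¹ * X ω ∂P
        = (cP P s F)⁻¹ * ∫ ω in F ∩ s, X ω ∂P := by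
      rw [← integral_const_mul]
      refine setIntegral_congr_fun (hFm.inter hsm) fun ω hω => ?_
      rw [hconst ω hω]
    have step2 : ∫ ω in F ∩ s, X ω ∂P = cP P s F * ∫ ω in F, X ω ∂P := by
      rw [← setIntegral_indicator hsm]
      have e3 : ∀ ω, Set.indicator s X ω
          = X ω * (if A ⟨t, ht⟩ ω = abar ⟨t, ht⟩ then (1 : ℝ) else 0) := by
        intro ω
        by_cases h : A ⟨t, ht⟩ ω = abar ⟨t, ht⟩ <;>
          simp [Set.indicator_apply, hs, Set.mem_setOf_eq, h]
      rw [show ∫ ω in F, Set.indicator s X ω ∂P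
          = ∫ ω in F, X ω * (if A ⟨t, ht⟩ ω = abar ⟨t, ht⟩ then (1 : ℝ) else 0) ∂P from
        integral_congr_ae (Filter.Eventually.of_forall e3)]
      exact hyp l hPF
    rw [step1, step2, ← mul_assoc, inv_mul_cancel₀ (ne_of_gt hcpos), one_mul]

lemma main_lemma (P : Measure Ω) [IsProbabilityMeasure P]
    (A : Fin K → Ω → Bool) (L : Fin K → Ω → 𝓛)
    (hA : ∀ k, Measurable (A k)) (hL : ∀ k, Measurable (L k)) (hA3 : A3ok P A L)
    (abar : Fin K → Bool) :
    ∀ n t : ℕ, t + n = K →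
    ∀ X : Ω → ℝ, Measurable X → Integrable X P →
    (∀ k : Fin K, t ≤ (k : ℕ) → ∀ l : Fin K → 𝓛,
        P (Lpast L (k : ℕ) l ∩ Apast A (k : ℕ) abar) ≠ 0 →
        ∫ ω in Lpast L (k : ℕ) l ∩ Apast A (k : ℕ) abar,
            X ω * (if A k ω = abar k then (1 : ℝ) else 0) ∂P
          = cP P {ω | A k ω = abar k} (Lpast L (k : ℕ) l ∩ Apast A (k : ℕ) abar)
              * ∫ ω in Lpast L (k : ℕ) l ∩ Apast A (k : ℕ) abar, X ω ∂P) →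
    ∫ ω in Apast A t abar,
        (∏ k ∈ Finset.univ.filter (fun k : Fin K => t ≤ (k : ℕ)),
          (if A k ω = abar k then (1 : ℝ) else 0) * (pden P A L k ω)⁻¹) * X ω ∂P
      = ∫ ω in Apast A t abar, X ω ∂P := by
  intro n
  induction n with
  | zero =>
    intro t ht X hXm hXi _
    have hfe : Finset.univ.filter (fun k : Fin K => t ≤ (k : ℕ)) = ∅ := by
      ext k
      simp only [Finset.mem_filter, Finset.mem_univ, true_and, Finset.notMem_empty,
        iff_false, not_le]
      omega
    rw [hfe]
    simp
  | succ n IH =>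
    intro t ht X hXm hXi hyp
    have htK : t < K := by omega
    have hfe : Finset.univ.filter (fun k : Fin K => t ≤ (k : ℕ))
        = insert (⟨t, htK⟩ : Fin K) (Finset.univ.filter (fun k : Fin K => t + 1 ≤ (k : ℕ))) := by
      ext k
      simp only [Finset.mem_filter, Finset.mem_univ, true_and, Finset.mem_insert, Fin.ext_iff]
      omega
    have hnm : (⟨t, htK⟩ : Fin K) ∉ Finset.univ.filter (fun k : Fin K => t + 1 ≤ (k : ℕ)) := by
      simp
    set X' : Ω → ℝ := fun ω => (pden P A L ⟨t, htK⟩ ω)⁻¹ * X ω with hX'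
    have hX'm : Measurable X' := ((measurable_pden P hA hL ⟨t, htK⟩).inv).mul hXm
    have hX'i : Integrable X' P := by
      obtain ⟨C, hC⟩ := pden_inv_bdd P A L ⟨t, htK⟩
      exact hXi.bdd_mul ((measurable_pden P hA hL ⟨t, htK⟩).inv).aestronglyMeasurable (ae_of_all _ hC)
    set s : Set Ω := {ω | A ⟨t, htK⟩ ω = abar ⟨t, htK⟩} with hs
    have hsm : MeasurableSet s := hA _ (measurableSet_singleton _)
    have e1 : ∀ ω, (∏ k ∈ Finset.univ.filter (fun k : Fin K => t ≤ (k : ℕ)),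
          (if A k ω = abar k then (1 : ℝ) else 0) * (pden P A L k ω)⁻¹) * X ω
        = Set.indicator s (fun ω =>
            (∏ k ∈ Finset.univ.filter (fun k : Fin K => t + 1 ≤ (k : ℕ)),
              (if A k ω = abar k then (1 : ℝ) else 0) * (pden P A L k ω)⁻¹) * X' ω) ω := by
      intro ω
      rw [hfe, Finset.prod_insert hnm]
      by_cases h : A ⟨t, htK⟩ ω = abar ⟨t, htK⟩
      · rw [Set.indicator_of_mem (by exact h), if_pos h, hX']
        ring
      · rw [Set.indicator_of_notMem (by exact h), if_neg h]
        ring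
    rw [show ∫ ω in Apast A t abar,
          (∏ k ∈ Finset.univ.filter (fun k : Fin K => t ≤ (k : ℕ)),
            (if A k ω = abar k then (1 : ℝ) else 0) * (pden P A L k ω)⁻¹) * X ω ∂P
        = ∫ ω in Apast A t abar, Set.indicator s (fun ω =>
            (∏ k ∈ Finset.univ.filter (fun k : Fin K => t + 1 ≤ (k : ℕ)),
              (if A k ω = abar k then (1 : ℝ) else 0) * (pden P A L k ω)⁻¹) * X' ω) ω ∂P from
      integral_congr_ae (Filter.Eventually.of_forall e1)]
    rw [setIntegral_indicator hsm]
    have e2 : Apast A t abar ∩ s = Apast A (t + 1) abar := by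
      rw [Apast_succ htK]
    rw [e2]
    have hyp' : ∀ k : Fin K, t + 1 ≤ (k : ℕ) → ∀ l : Fin K → 𝓛,
        P (Lpast L (k : ℕ) l ∩ Apast A (k : ℕ) abar) ≠ 0 →
        ∫ ω in Lpast L (k : ℕ) l ∩ Apast A (k : ℕ) abar,
            X' ω * (if A k ω = abar k then (1 : ℝ) else 0) ∂P
          = cP P {ω | A k ω = abar k} (Lpast L (k : ℕ) l ∩ Apast A (k : ℕ) abar)
              * ∫ ω in Lpast L (k : ℕ) l ∩ Apast A (k : ℕ) abar, X' ω ∂P := by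
      intro k hk l hne
      have hFm : MeasurableSet (Lpast L (k : ℕ) l ∩ Apast A (k : ℕ) abar) :=
        (measurableSet_Lpast hL _ _).inter (measurableSet_Apast hA _ _)
      set c := cP P {ω' | A ⟨t, htK⟩ ω' = abar ⟨t, htK⟩}
        (Lpast L t l ∩ Apast A t abar) with hc
      have hconst : ∀ ω ∈ Lpast L (k : ℕ) l ∩ Apast A (k : ℕ) abar,
          pden P A L ⟨t, htK⟩ ω = c := by
        rintro ω ⟨hωL, hωA⟩
        exact pden_const P A L ⟨t, htK⟩ abar l ω
          (fun j hj => hωL j (le_trans hj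
            (show ((⟨t, htK⟩ : Fin K) : ℕ) ≤ (k : ℕ) by
              simp only [Fin.val_mk]; omega)))
          (fun j hj => hωA j (by simp only [Fin.val_mk] at hj; omega))
      have c1 : ∫ ω in Lpast L (k : ℕ) l ∩ Apast A (k : ℕ) abar,
            X' ω * (if A k ω = abar k then (1 : ℝ) else 0) ∂P
          = c⁻¹ * ∫ ω in Lpast L (k : ℕ) l ∩ Apast A (k : ℕ) abar,
              X ω * (if A k ω = abar k then (1 : ℝ) else 0) ∂P := by
        rw [← integral_const_mul]
        refine setIntegral_congr_fun hFm fun ω hω => ?_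
        rw [hX']
        simp only
        rw [hconst ω hω]
        ring
      have c2 : ∫ ω in Lpast L (k : ℕ) l ∩ Apast A (k : ℕ) abar, X' ω ∂P
          = c⁻¹ * ∫ ω in Lpast L (k : ℕ) l ∩ Apast A (k : ℕ) abar, X ω ∂P := by
        rw [← integral_const_mul]
        refine setIntegral_congr_fun hFm fun ω hω => ?_
        rw [hX']
        simp only
        rw [hconst ω hω]
      rw [c1, c2, hyp k (by omega) l hne]
      ring
    rw [IH (t + 1) (by omega) X' hX'm hX'i hyp']
    exact single_step P A L hA hL hA3 abar t htK X hXm hXi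
      (fun l hne => hyp ⟨t, htK⟩ (le_refl t) l hne)

lemma chain_lemma (P : Measure Ω) [IsProbabilityMeasure P] (A : Fin K → Ω → Bool)
    (abar : Fin K → Bool) (s : ℕ) :
    ∀ t : ℕ, s ≤ t → t ≤ K →
      (∏ k ∈ Finset.univ.filter (fun k : Fin K => s ≤ (k : ℕ) ∧ (k : ℕ) < t),
          cP P {ω | A k ω = abar k} (Apast A (k : ℕ) abar)) * (P (Apast A s abar)).toReal
        = (P (Apast A t abar)).toReal := by
  intro t
  induction t with
  | zero =>
    intro hs0 _
    have hs : s = 0 := Nat.le_zero.mp hs0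
    subst hs
    have hfe : Finset.univ.filter (fun k : Fin K => 0 ≤ (k : ℕ) ∧ (k : ℕ) < 0) = ∅ := by
      ext k; simp
    rw [hfe]; simp
  | succ t IHt =>
    intro hst htK
    by_cases hst' : s ≤ t
    · have ht : t < K := htK
      have hins : Finset.univ.filter (fun k : Fin K => s ≤ (k : ℕ) ∧ (k : ℕ) < t + 1)
          = insert (⟨t, ht⟩ : Fin K)
              (Finset.univ.filter (fun k : Fin K => s ≤ (k : ℕ) ∧ (k : ℕ) < t)) := by
        ext k
        simp only [Finset.mem_filter, Finset.mem_univ, true_and, Finset.mem_insert,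
          Fin.ext_iff, Fin.val_mk]
        omega
      have hnm : (⟨t, ht⟩ : Fin K)
          ∉ Finset.univ.filter (fun k : Fin K => s ≤ (k : ℕ) ∧ (k : ℕ) < t) := by
        simp only [Finset.mem_filter, Finset.mem_univ, true_and, Fin.val_mk]
        omega
      rw [hins, Finset.prod_insert hnm, mul_assoc, IHt hst' (le_of_lt ht), ← cP_mul,
        show {ω | A ⟨t, ht⟩ ω = abar ⟨t, ht⟩} ∩ Apast A t abar = Apast A (t + 1) abar from by
          rw [Apast_succ ht, Set.inter_comm]]
    · have hs : s = t + 1 := by omega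
      subst hs
      have hfe : Finset.univ.filter
          (fun k : Fin K => t + 1 ≤ (k : ℕ) ∧ (k : ℕ) < t + 1) = ∅ := by
        ext k
        simp only [Finset.mem_filter, Finset.mem_univ, true_and, Finset.notMem_empty,
          iff_false]
        omega
      rw [hfe]; simp

end Aux

section Aux2
variable [MeasurableSpace 𝓛] [Fintype 𝓛] [Nonempty 𝓛] [MeasurableSingletonClass 𝓛]

lemma full_eq {A : Fin K → Ω → Bool} {m : ℕ} {a : Bool}
    {bb : {k : Fin K // (k : ℕ) < K - m} → Bool} {ω : Ω}
    (hω : ω ∈ Etr A m a ∩ ApastV A m bb) (j : Fin K) :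
    A j ω = concatRegime m bb (fun _ => a) j := by
  obtain ⟨hE, hV⟩ := hω
  by_cases hj : (j : ℕ) < K - m
  · rw [concatRegime, dif_pos hj]
    exact hV j hj
  · rw [concatRegime, dif_neg hj]
    exact hE j (by omega)

lemma ApastV_eq_Apast (A : Fin K → Ω → Bool) (m : ℕ)
    (bb : {k : Fin K // (k : ℕ) < K - m} → Bool) (as : Fin K → Bool) :
    ApastV A m bb = Apast A (K - m) (concatRegime m bb as) := by
  ext ω
  constructor
  · intro h k hk
    rw [concatRegime, dif_pos hk]
    exact h k hk
  · intro h k hk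
    have := h k hk
    rwa [concatRegime, dif_pos hk] at this

lemma Etr_inter_ApastV (A : Fin K → Ω → Bool) (m : ℕ) (a : Bool)
    (bb : {k : Fin K // (k : ℕ) < K - m} → Bool) :
    Etr A m a ∩ ApastV A m bb = Apast A K (concatRegime m bb (fun _ => a)) := by
  ext ω
  constructor
  · intro hω k _
    exact full_eq hω k
  · intro hω
    constructor
    · intro k hk
      have := hω k k.isLt
      rwa [concatRegime, dif_neg (by omega)] at this
    · intro k hk
      have := hω k k.isLt
      rwa [concatRegime, dif_pos hk] at this

lemma measurableSet_ApastV {A : Fin K → Ω → Bool} (hA : ∀ k, Measurable (A k))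
    (m : ℕ) (bb : {k : Fin K // (k : ℕ) < K - m} → Bool) :
    MeasurableSet (ApastV A m bb) := by
  have : ApastV A m bb
      = ⋂ k : Fin K, ⋂ h : (k : ℕ) < K - m, {ω | A k ω = bb ⟨k, h⟩} := by
    ext ω; simp [ApastV]
  rw [this]
  exact MeasurableSet.iInter fun k => MeasurableSet.iInter fun h =>
    hA k (measurableSet_singleton _)

lemma measurableSet_Etr {A : Fin K → Ω → Bool} (hA : ∀ k, Measurable (A k))
    (m : ℕ) (a : Bool) : MeasurableSet (Etr A m a) := by
  have : Etr A m a = ⋂ k : Fin K, ⋂ _ : K - m ≤ (k : ℕ), {ω | A k ω = a} := by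
    ext ω; simp [Etr, EtrV]
  rw [this]
  exact MeasurableSet.iInter fun k => MeasurableSet.iInter fun _ =>
    hA k (measurableSet_singleton _)

lemma hyp_one (P : Measure Ω) [IsProbabilityMeasure P]
    (A : Fin K → Ω → Bool) (L : Fin K → Ω → 𝓛)
    (hA : ∀ k, Measurable (A k)) (hL : ∀ k, Measurable (L k))
    (abar : Fin K → Bool) (k : Fin K) (l : Fin K → 𝓛) :
    ∫ ω in Lpast L (k : ℕ) l ∩ Apast A (k : ℕ) abar,
        (1 : ℝ) * (if A k ω = abar k then (1 : ℝ) else 0) ∂P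
      = cP P {ω | A k ω = abar k} (Lpast L (k : ℕ) l ∩ Apast A (k : ℕ) abar)
          * ∫ ω in Lpast L (k : ℕ) l ∩ Apast A (k : ℕ) abar, (1 : ℝ) ∂P := by
  set s : Set Ω := {ω | A k ω = abar k} with hs
  set F : Set Ω := Lpast L (k : ℕ) l ∩ Apast A (k : ℕ) abar with hF
  have hsm : MeasurableSet s := hA _ (measurableSet_singleton _)
  have e3 : ∀ ω, (1 : ℝ) * (if A k ω = abar k then (1 : ℝ) else 0)
      = Set.indicator s (fun _ => (1 : ℝ)) ω := by
    intro ω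
    by_cases h : A k ω = abar k <;> simp [Set.indicator_apply, hs, Set.mem_setOf_eq, h]
  rw [show ∫ ω in F, (1 : ℝ) * (if A k ω = abar k then (1 : ℝ) else 0) ∂P
      = ∫ ω in F, Set.indicator s (fun _ => (1 : ℝ)) ω ∂P from
    integral_congr_ae (Filter.Eventually.of_forall e3)]
  rw [setIntegral_indicator hsm, setIntegral_const, setIntegral_const]
  simp only [smul_eq_mul, mul_one, measureReal_def]
  rw [Set.inter_comm F s, cP_mul P s F]

lemma piece (P : Measure Ω) [IsProbabilityMeasure P]
    (A : Fin K → Ω → Bool) (L : Fin K → Ω → 𝓛)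
    (hA : ∀ k, Measurable (A k)) (hL : ∀ k, Measurable (L k)) (hA3 : A3ok P A L)
    (m : ℕ) (hmK : m ≤ K) (a : Bool)
    (bb : {k : Fin K // (k : ℕ) < K - m} → Bool)
    (X : Ω → ℝ) (hXm : Measurable X) (hXi : Integrable X P)
    (hyp : ∀ k : Fin K, K - m ≤ (k : ℕ) → ∀ l : Fin K → 𝓛,
        P (Lpast L (k : ℕ) l ∩ Apast A (k : ℕ) (concatRegime m bb (fun _ => a))) ≠ 0 →
        ∫ ω in Lpast L (k : ℕ) l ∩ Apast A (k : ℕ) (concatRegime m bb (fun _ => a)),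
            X ω * (if A k ω = concatRegime m bb (fun _ => a) k then (1 : ℝ) else 0) ∂P
          = cP P {ω | A k ω = concatRegime m bb (fun _ => a) k}
              (Lpast L (k : ℕ) l ∩ Apast A (k : ℕ) (concatRegime m bb (fun _ => a)))
              * ∫ ω in Lpast L (k : ℕ) l
                  ∩ Apast A (k : ℕ) (concatRegime m bb (fun _ => a)), X ω ∂P) :
    ∫ ω in Etr A m a ∩ ApastV A m bb, Wpsw P A L m ω * X ω ∂P
      = (∏ k ∈ Finset.univ.filter (fun k : Fin K => K - m ≤ (k : ℕ)),
          cP P {ω | A k ω = concatRegime m bb (fun _ => a) k}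
            (Apast A (k : ℕ) (concatRegime m bb (fun _ => a))))
        * ∫ ω in ApastV A m bb, X ω ∂P := by
  classical
  set abar : Fin K → Bool := concatRegime m bb (fun _ => a) with habar
  set fil : Finset (Fin K) := Finset.univ.filter (fun k : Fin K => K - m ≤ (k : ℕ))
    with hfil
  set Nb : ℝ := ∏ k ∈ fil, cP P {ω | A k ω = abar k} (Apast A (k : ℕ) abar) with hNb
  have hmeas : MeasurableSet (Etr A m a ∩ ApastV A m bb) :=
    (measurableSet_Etr hA m a).inter (measurableSet_ApastV hA m bb)
  have ecg : ∀ ω ∈ Etr A m a ∩ ApastV A m bb,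
      Wpsw P A L m ω * X ω
        = Nb * ((∏ k ∈ fil,
            (if A k ω = abar k then (1 : ℝ) else 0) * (pden P A L k ω)⁻¹) * X ω) := by
    intro ω hω
    have hfull : ∀ j : Fin K, A j ω = abar j := fun j => full_eq hω j
    have hW : Wpsw P A L m ω
        = ∏ k ∈ fil, cP P {ω' | A k ω' = abar k} (Apast A (k : ℕ) abar)
            * (pden P A L k ω)⁻¹ := by
      refine Finset.prod_congr rfl fun k _ => ?_
      show cP P {ω' | A k ω' = A k ω} (Apast A (k : ℕ) (fun j => A j ω))
            / pden P A L k ω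
          = cP P {ω' | A k ω' = abar k} (Apast A (k : ℕ) abar) * (pden P A L k ω)⁻¹
      have h1 : {ω' | A k ω' = A k ω} = {ω' | A k ω' = abar k} := by rw [hfull k]
      have h2 : Apast A (k : ℕ) (fun j => A j ω) = Apast A (k : ℕ) abar :=
        Apast_congr fun j _ => hfull j
      rw [h1, h2, div_eq_mul_inv]
    have h4 : (∏ k ∈ fil, (if A k ω = abar k then (1 : ℝ) else 0) * (pden P A L k ω)⁻¹)
        = ∏ k ∈ fil, (pden P A L k ω)⁻¹ :=
      Finset.prod_congr rfl fun k _ => by rw [if_pos (hfull k), one_mul]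
    rw [hW, Finset.prod_mul_distrib, h4, hNb]
    ring
  rw [setIntegral_congr_fun hmeas ecg, integral_const_mul]
  congr 1
  have hzero : ∀ ω, ω ∉ Etr A m a →
      (∏ k ∈ fil, (if A k ω = abar k then (1 : ℝ) else 0) * (pden P A L k ω)⁻¹) * X ω
        = 0 := by
    intro ω h
    have h' : ∃ k : Fin K, K - m ≤ (k : ℕ) ∧ A k ω ≠ a := by
      by_contra hc
      push_neg at hc
      exact h fun k hk => hc k hk
    obtain ⟨k, hk1, hk2⟩ := h'
    have habk : abar k = a := by rw [habar, concatRegime, dif_neg (by omega)]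
    have : (∏ k ∈ fil, (if A k ω = abar k then (1 : ℝ) else 0) * (pden P A L k ω)⁻¹)
        = 0 := by
      refine Finset.prod_eq_zero (by simp only [hfil, Finset.mem_filter, Finset.mem_univ, true_and]; exact hk1 : k ∈ fil) ?_
      rw [if_neg (by rw [habk]; exact hk2), zero_mul]
    rw [this, zero_mul]
  have hind : ∀ ω, (∏ k ∈ fil, (if A k ω = abar k then (1 : ℝ) else 0)
        * (pden P A L k ω)⁻¹) * X ω
      = Set.indicator (Etr A m a) (fun ω =>
          (∏ k ∈ fil, (if A k ω = abar k then (1 : ℝ) else 0)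
            * (pden P A L k ω)⁻¹) * X ω) ω := by
    intro ω
    by_cases h : ω ∈ Etr A m a
    · rw [Set.indicator_of_mem h]
    · rw [Set.indicator_of_notMem h]
      exact hzero ω h
  have ext1 : ∫ ω in Etr A m a ∩ ApastV A m bb,
        (∏ k ∈ fil, (if A k ω = abar k then (1 : ℝ) else 0)
          * (pden P A L k ω)⁻¹) * X ω ∂P
      = ∫ ω in ApastV A m bb,
          (∏ k ∈ fil, (if A k ω = abar k then (1 : ℝ) else 0)
            * (pden P A L k ω)⁻¹) * X ω ∂P := by
    rw [show ∫ ω in ApastV A m bb,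
          (∏ k ∈ fil, (if A k ω = abar k then (1 : ℝ) else 0)
            * (pden P A L k ω)⁻¹) * X ω ∂P
        = ∫ ω in ApastV A m bb, Set.indicator (Etr A m a) (fun ω =>
            (∏ k ∈ fil, (if A k ω = abar k then (1 : ℝ) else 0)
              * (pden P A L k ω)⁻¹) * X ω) ω ∂P from
      integral_congr_ae (Filter.Eventually.of_forall fun ω => hind ω),
      setIntegral_indicator (measurableSet_Etr hA m a), Set.inter_comm]
  rw [ext1, show ApastV A m bb = Apast A (K - m) abar from ApastV_eq_Apast A m bb _]
  exact main_lemma P A L hA hL hA3 abar m (K - m) (by omega) X hXm hXi hyp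

end Aux2

end AuxMSM

/-- Characterization of the PSW estimand (equation (B.4.2)). -/
theorem psw_estimand_characterization
    {Ω : Type*} [MeasurableSpace Ω] {𝓛 : Type*} [MeasurableSpace 𝓛]
    [Fintype 𝓛] [Nonempty 𝓛] [MeasurableSingletonClass 𝓛]
    (P : Measure Ω) [IsProbabilityMeasure P]
    {K m : ℕ} (hK : 1 ≤ K) (hm1 : 1 ≤ m) (hmK : m ≤ K)
    (A : Fin K → Ω → Bool) (L : Fin K → Ω → 𝓛)
    (hA : ∀ k, Measurable (A k)) (hL : ∀ k, Measurable (L k))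
    (Y : Ω → ℝ) (hY : Measurable Y)
    (Ypot : (Fin K → Bool) → Ω → ℝ)
    (hYpm : ∀ a, Measurable (Ypot a)) (hYpi : ∀ a, Integrable (Ypot a) P)
    (hpos1 : 0 < P (Etr A m true)) (hpos0 : 0 < P (Etr A m false))
    (hA1 : A1ok A Y Ypot) (hA2 : A2ok P A L Ypot) (hA3 : A3ok P A L) :
    θW P A m (Wpsw P A L m) Y =
      (∑ b : ({k : Fin K // (k : ℕ) < K - m} → Bool),
          if 0 < P (ApastV A m b) then
            ((∫ ω in ApastV A m b, Ypot (concatRegime m b (fun _ => true)) ω ∂P) /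
                (P (ApastV A m b)).toReal) *
              cP P (ApastV A m b) (Etr A m true)
          else 0) -
        ∑ b : ({k : Fin K // (k : ℕ) < K - m} → Bool),
          if 0 < P (ApastV A m b) then
            ((∫ ω in ApastV A m b, Ypot (concatRegime m b (fun _ => false)) ω ∂P) /
                (P (ApastV A m b)).toReal) *
              cP P (ApastV A m b) (Etr A m false)
          else 0 := by
  classical
  set hB : Ω → ({k : Fin K // (k : ℕ) < K - m} → Bool) := fun ω k => A k ω with hBdef
  have hBmeas : Measurable hB := measurable_pi_lambda _ fun k => hA k.1
  have hfib : ∀ bb : {k : Fin K // (k : ℕ) < K - m} → Bool,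
      hB ⁻¹' {bb} = ApastV A m bb := by
    intro bb; ext ω
    simp only [Set.mem_preimage, Set.mem_singleton_iff, funext_iff, hBdef, ApastV,
      Set.mem_setOf_eq]
    exact ⟨fun h k hk => h ⟨k, hk⟩, fun h k => h k.1 k.2⟩
  have hWm : Measurable (Wpsw P A L m) :=
    measurable_hist_fun hA hL (fun p : (Fin K → Bool) × (Fin K → 𝓛) =>
      ∏ k ∈ Finset.univ.filter (fun k : Fin K => K - m ≤ (k : ℕ)),
        cP P {ω' | A k ω' = p.1 k} (Apast A (k : ℕ) p.1) /
          cP P {ω' | A k ω' = p.1 k} (Lpast L (k : ℕ) p.2 ∩ Apast A (k : ℕ) p.1))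
  have hWbdd : ∃ C, ∀ ω, ‖Wpsw P A L m ω‖ ≤ C := by
    obtain ⟨C, hC⟩ := hist_fun_bdd (A := A) (L := L)
      (fun p : (Fin K → Bool) × (Fin K → 𝓛) =>
        ∏ k ∈ Finset.univ.filter (fun k : Fin K => K - m ≤ (k : ℕ)),
          cP P {ω' | A k ω' = p.1 k} (Apast A (k : ℕ) p.1) /
            cP P {ω' | A k ω' = p.1 k} (Lpast L (k : ℕ) p.2 ∩ Apast A (k : ℕ) p.1))
    exact ⟨C, fun ω => hC ω⟩
  have hWint : Integrable (Wpsw P A L m) P := by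
    have := (integrable_const (1 : ℝ) (μ := P)).bdd_mul hWm.aestronglyMeasurable (ae_of_all _ hWbdd.choose_spec)
    simpa using this
  have arm : ∀ a : Bool, 0 < P (Etr A m a) →
      (∫ ω in Etr A m a, Wpsw P A L m ω * Y ω ∂P)
          / (∫ ω in Etr A m a, Wpsw P A L m ω ∂P)
        = ∑ bb : {k : Fin K // (k : ℕ) < K - m} → Bool,
            if 0 < P (ApastV A m bb) then
              ((∫ ω in ApastV A m bb, Ypot (concatRegime m bb (fun _ => a)) ω ∂P)
                  / (P (ApastV A m bb)).toReal) * cP P (ApastV A m bb) (Etr A m a)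
            else 0 := by
    intro a hpos
    have hEtrm : MeasurableSet (Etr A m a) := measurableSet_Etr hA m a
    have hPE : (P (Etr A m a)).toReal ≠ 0 :=
      ENNReal.toReal_ne_zero.mpr ⟨ne_of_gt hpos, measure_ne_top _ _⟩
    have hIntN : ∀ bb, IntegrableOn (fun ω => Wpsw P A L m ω * Y ω)
        (Etr A m a ∩ hB ⁻¹' {bb}) P := by
      intro bb
      rw [hfib bb]
      have hint0 : Integrable (fun ω => Wpsw P A L m ω
          * Ypot (concatRegime m bb (fun _ => a)) ω) P :=
        (hYpi _).bdd_mul hWm.aestronglyMeasurable (ae_of_all _ hWbdd.choose_spec)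
      refine Integrable.congr hint0.integrableOn ?_
      refine (ae_restrict_iff' (hEtrm.inter
        (measurableSet_ApastV hA m bb))).mpr (ae_of_all _ fun ω hω => ?_)
      show Wpsw P A L m ω * Ypot (concatRegime m bb (fun _ => a)) ω
        = Wpsw P A L m ω * Y ω
      rw [hA1 (concatRegime m bb (fun _ => a)) ω (fun k => full_eq hω k)]
    have hNum : ∫ ω in Etr A m a, Wpsw P A L m ω * Y ω ∂P
        = ∑ bb : {k : Fin K // (k : ℕ) < K - m} → Bool,
            (∏ k ∈ Finset.univ.filter (fun k : Fin K => K - m ≤ (k : ℕ)),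
              cP P {ω | A k ω = concatRegime m bb (fun _ => a) k}
                (Apast A (k : ℕ) (concatRegime m bb (fun _ => a))))
            * ∫ ω in ApastV A m bb, Ypot (concatRegime m bb (fun _ => a)) ω ∂P := by
      rw [setIntegral_partition P hBmeas hEtrm hIntN]
      refine Finset.sum_congr rfl fun bb _ => ?_
      rw [hfib bb]
      rw [setIntegral_congr_fun (hEtrm.inter (measurableSet_ApastV hA m bb))
        (fun ω hω => by
          show Wpsw P A L m ω * Y ω
            = Wpsw P A L m ω * Ypot (concatRegime m bb (fun _ => a)) ω
          rw [hA1 (concatRegime m bb (fun _ => a)) ω (fun k => full_eq hω k)] :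
          Set.EqOn (fun ω => Wpsw P A L m ω * Y ω)
            (fun ω => Wpsw P A L m ω * Ypot (concatRegime m bb (fun _ => a)) ω)
            (Etr A m a ∩ ApastV A m bb))]
      exact piece P A L hA hL hA3 m hmK a bb _ (hYpm _) (hYpi _)
        (fun k _ l hne => exch_step P A L hA hL Ypot hYpm hA2 _ k l hne)
    have hchain : ∀ bb : {k : Fin K // (k : ℕ) < K - m} → Bool,
        (∏ k ∈ Finset.univ.filter (fun k : Fin K => K - m ≤ (k : ℕ)),
            cP P {ω | A k ω = concatRegime m bb (fun _ => a) k}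
              (Apast A (k : ℕ) (concatRegime m bb (fun _ => a))))
            * (P (ApastV A m bb)).toReal
          = (P (Apast A K (concatRegime m bb (fun _ => a)))).toReal := by
      intro bb
      have hfe : Finset.univ.filter (fun k : Fin K => K - m ≤ (k : ℕ))
          = Finset.univ.filter (fun k : Fin K => K - m ≤ (k : ℕ) ∧ (k : ℕ) < K) := by
        ext k
        simp only [Finset.mem_filter, Finset.mem_univ, true_and]
        exact ⟨fun h => ⟨h, k.isLt⟩, fun h => h.1⟩
      rw [hfe, ApastV_eq_Apast A m bb (fun _ => a)]
      exact chain_lemma P A (concatRegime m bb (fun _ => a)) (K - m) K (by omega) le_rfl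
    have hDen : ∫ ω in Etr A m a, Wpsw P A L m ω ∂P = (P (Etr A m a)).toReal := by
      rw [setIntegral_partition P hBmeas hEtrm (fun bb => hWint.integrableOn)]
      have hper : ∀ bb : {k : Fin K // (k : ℕ) < K - m} → Bool,
          ∫ ω in Etr A m a ∩ hB ⁻¹' {bb}, Wpsw P A L m ω ∂P
            = (P (Apast A K (concatRegime m bb (fun _ => a)))).toReal := by
        intro bb
        rw [hfib bb]
        rw [show ∫ ω in Etr A m a ∩ ApastV A m bb, Wpsw P A L m ω ∂P
            = ∫ ω in Etr A m a ∩ ApastV A m bb, Wpsw P A L m ω * (1 : ℝ) ∂P from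
          integral_congr_ae (Filter.Eventually.of_forall fun ω => (mul_one _).symm)]
        rw [piece P A L hA hL hA3 m hmK a bb (fun _ => (1 : ℝ)) measurable_const
          (integrable_const 1) (fun k _ l _ => hyp_one P A L hA hL _ k l)]
        rw [setIntegral_const]
        simp only [smul_eq_mul, mul_one, measureReal_def]
        exact hchain bb
      rw [Finset.sum_congr rfl fun bb _ => hper bb]
      have hone : ∀ bb : {k : Fin K // (k : ℕ) < K - m} → Bool,
          (P (Apast A K (concatRegime m bb (fun _ => a)))).toReal
            = ∫ ω in Etr A m a ∩ hB ⁻¹' {bb}, (1 : ℝ) ∂P := by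
        intro bb
        rw [hfib bb, setIntegral_const]
        simp only [smul_eq_mul, mul_one, measureReal_def]
        rw [Etr_inter_ApastV A m a bb]
      rw [Finset.sum_congr rfl fun bb _ => hone bb,
        ← setIntegral_partition P hBmeas hEtrm (fun bb => (integrable_const 1).integrableOn),
        setIntegral_const]
      simp [measureReal_def]
    rw [hNum, hDen, Finset.sum_div]
    refine Finset.sum_congr rfl fun bb _ => ?_
    by_cases hb : 0 < P (ApastV A m bb)
    · rw [if_pos hb]
      have hPV : (P (ApastV A m bb)).toReal ≠ 0 :=
        ENNReal.toReal_ne_zero.mpr ⟨ne_of_gt hb, measure_ne_top _ _⟩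
      have hcp : cP P (ApastV A m bb) (Etr A m a)
          = (P (Apast A K (concatRegime m bb (fun _ => a)))).toReal
              / (P (Etr A m a)).toReal := by
        rw [cP, Set.inter_comm, Etr_inter_ApastV]
      rw [hcp, ← hchain bb]
      field_simp
    · rw [if_neg hb]
      have h0 : P (ApastV A m bb) = 0 := by
        by_contra hc
        exact hb (zero_lt_iff.mpr hc)
      rw [Measure.restrict_eq_zero.mpr h0, integral_zero_measure, mul_zero, zero_div]
  show (∫ ω in Etr A m true, Wpsw P A L m ω * Y ω ∂P)
        / (∫ ω in Etr A m true, Wpsw P A L m ω ∂P)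
      - (∫ ω in Etr A m false, Wpsw P A L m ω * Y ω ∂P)
          / (∫ ω in Etr A m false, Wpsw P A L m ω ∂P) = _
  rw [arm true hpos1, arm false hpos0]

end MSMPaper
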